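/- Consider a single player i with strategy set X_i ⊆ ℝ^{m_i}, a continuously differentiable objective J_i : ℝ^m → ℝ, and conjecture maps γ_i^j(·;θ_{i,j}) : X_i → ℝ^{m_j}, θ_{i,j} ∈ Θ_{i,j}, differentiable in x_i and satisfying the expressivity condition: for all x_i ∈ X_i, x_j ∈ X_j and every matrix α ∈ ℝ^{m_j×m_i} there exists θ_{i,j} ∈ Θ_{i,j} with γ_i^j(x_i;θ_{i,j}) = x_j and ∇_{x_i}γ_i^j(x_i;θ_{i,j}) = α. Let x* ∈ ∏_k X_k be a target profile with ∇_{x_{-i}} J_i(x*) ≠ 0. Then the decentralized problem of player i admits a solution: there exist x̃_i ∈ X_i and θ̃_i = (θ̃_{i,j})_{j≠i} with θ̃_{i,j} ∈ Θ_{i,j} such that the total derivative of x_i ↦ J_i(x_i, γ_i^{-i}(x_i;θ̃_i)) vanishes at x̃_i and J_i(x̃_i, γ_i^{-i}(x̃_i;θ̃_i)) = J_i(x*). -/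

import Mathlib

/-- The profile conjectured by player `i` when it plays `y`: coordinate `i` is `y` itself
and coordinate `j ≠ i` is the conjectured strategy `γ i j y (θ j)` of player `j`. -/
noncomputable def conjProfile {N d : ℕ} {m : Fin N → ℕ}
    (γ : (i j : Fin N) → EuclideanSpace ℝ (Fin (m i)) → EuclideanSpace ℝ (Fin d) →
      EuclideanSpace ℝ (Fin (m j)))
    (θ : (j : Fin N) → EuclideanSpace ℝ (Fin d)) (i : Fin N)
    (y : EuclideanSpace ℝ (Fin (m i))) : (k : Fin N) → EuclideanSpace ℝ (Fin (m k)) :=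
  Function.update
    (fun j : Fin N =>
      if _h : j = i then (0 : EuclideanSpace ℝ (Fin (m j)))
      else γ i j y (θ j)) i y

/-- Proposition 4 of the paper, decentralized conjecture design: given a
target profile `x*` with nonzero partial gradient `∇_{x_{-i}} J_i(x*) ≠ 0`, and an
expressive conjecture class, player `i` can find a strategy `x̃_i ∈ X_i` and conjecture
parameters `θ̃_{i,j} ∈ Θ_{i,j}` such that its conjectured objective is stationary at
`x̃_i` and its conjectured value there equals the communicated target `J_i(x*)`. -/
theorem decentralized_design_has_solution (N d : ℕ) (m : Fin N → ℕ)
    (X : ∀ i : Fin N, Set (EuclideanSpace ℝ (Fin (m i))))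
    (Θ : Fin N → Fin N → Set (EuclideanSpace ℝ (Fin d)))
    (i : Fin N)
    (J : ((k : Fin N) → EuclideanSpace ℝ (Fin (m k))) → ℝ)
    (hJ : ContDiff ℝ 1 J)
    (γ : (i j : Fin N) → EuclideanSpace ℝ (Fin (m i)) → EuclideanSpace ℝ (Fin d) →
      EuclideanSpace ℝ (Fin (m j)))
    (hγdiff : ∀ j : Fin N, j ≠ i → ∀ θij : EuclideanSpace ℝ (Fin d),
      Differentiable ℝ (fun y => γ i j y θij))
    -- expressivity of the conjecture class of player `i`
    (hexpr : ∀ j : Fin N, j ≠ i → ∀ xi ∈ X i, ∀ xj ∈ X j,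
      ∀ α : EuclideanSpace ℝ (Fin (m i)) →L[ℝ] EuclideanSpace ℝ (Fin (m j)),
      ∃ θij ∈ Θ i j, γ i j xi θij = xj ∧ fderiv ℝ (fun y => γ i j y θij) xi = α)
    -- the target profile, feasible and with nonzero partial gradient `∇_{x_{-i}} J(x*)`
    (xstar : (k : Fin N) → EuclideanSpace ℝ (Fin (m k)))
    (hxstar : ∀ k, xstar k ∈ X k)
    (hgrad : ∃ j : Fin N, j ≠ i ∧
      fderiv ℝ (fun y : EuclideanSpace ℝ (Fin (m j)) =>
        J (Function.update xstar j y)) (xstar j) ≠ 0) :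
    ∃ xtilde ∈ X i, ∃ θtilde : (j : Fin N) → EuclideanSpace ℝ (Fin d),
      (∀ j : Fin N, j ≠ i → θtilde j ∈ Θ i j) ∧
      fderiv ℝ (fun y : EuclideanSpace ℝ (Fin (m i)) =>
        J (conjProfile γ θtilde i y)) xtilde = 0 ∧
      J (conjProfile γ θtilde i xtilde) = J xstar := by
  classical
  obtain ⟨j0, hj0i, hD⟩ := hgrad
  have hJd : Differentiable ℝ J := hJ.differentiable one_ne_zero
  set L := fderiv ℝ J xstar with hLdef
  have hLJ : HasFDerivAt J L xstar := (hJd xstar).hasFDerivAt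
  -- partial derivative at coordinate k equals L ∘ (single insertion)
  have hpart : ∀ k : Fin N,
      fderiv ℝ (fun y => J (Function.update xstar k y)) (xstar k)
        = L.comp (ContinuousLinearMap.pi (Pi.single k
            (ContinuousLinearMap.id ℝ (EuclideanSpace ℝ (Fin (m k)))))) := by
    intro k
    have h1 := hasFDerivAt_update (𝕜 := ℝ) xstar (xstar k)
    have h2 : HasFDerivAt J L (Function.update xstar k (xstar k)) := by
      rw [Function.update_eq_self]; exact hLJ
    exact (h2.comp _ h1).fderiv
  -- single insertion as applied map
  have hsingle : ∀ (k : Fin N) (v : EuclideanSpace ℝ (Fin (m k))),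
      (ContinuousLinearMap.pi (Pi.single k
        (ContinuousLinearMap.id ℝ (EuclideanSpace ℝ (Fin (m k)))))) v
        = (Pi.single k v : (l : Fin N) → EuclideanSpace ℝ (Fin (m l))) := by
    intro k v
    funext l
    by_cases h : l = k
    · subst h; simp
    · simp [Pi.single_apply, h, ContinuousLinearMap.pi_apply]
  -- get a direction with unit partial derivative at j0
  have hD' : ∃ v, L (Pi.single j0 v) ≠ 0 := by
    rw [hpart j0] at hD
    by_contra h
    push_neg at h
    apply hD
    ext v
    have hv2 := h v
    rw [← hsingle j0 v] at hv2
    simpa using hv2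
  obtain ⟨v, hv⟩ := hD'
  set c : ℝ := L (Pi.single j0 v) with hc
  set u : EuclideanSpace ℝ (Fin (m j0)) := c⁻¹ • v with hu
  have hLu : L (Pi.single j0 u) = 1 := by
    have : (Pi.single j0 u : (k : Fin N) → EuclideanSpace ℝ (Fin (m k)))
        = c⁻¹ • (Pi.single j0 v : (k : Fin N) → EuclideanSpace ℝ (Fin (m k))) := by
      funext l
      by_cases h : l = j0
      · subst h; simp [hu]
      · simp [Pi.single_apply, h]
    rw [this, map_smul, smul_eq_mul, inv_mul_cancel₀ hv]
  -- the linear map Di : h ↦ L (single i h)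
  set Di : EuclideanSpace ℝ (Fin (m i)) →L[ℝ] ℝ :=
    L.comp (ContinuousLinearMap.pi (Pi.single i
      (ContinuousLinearMap.id ℝ (EuclideanSpace ℝ (Fin (m i)))))) with hDi
  -- the matrix we want at j0
  set α0 : EuclideanSpace ℝ (Fin (m i)) →L[ℝ] EuclideanSpace ℝ (Fin (m j0)) :=
    -(Di.smulRight u) with hα0
  -- choose conjecture parameters
  have hθ : ∀ j : Fin N, j ≠ i → ∃ θj ∈ Θ i j,
      γ i j (xstar i) θj = xstar j ∧
      fderiv ℝ (fun y => γ i j y θj) (xstar i)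
        = (if h : j = j0 then h ▸ α0 else 0) := by
    intro j hj
    exact hexpr j hj (xstar i) (hxstar i) (xstar j) (hxstar j) _
  choose θfun hθΘ hθval hθder using fun j (hj : j ≠ i) => hθ j hj
  set θtilde : (j : Fin N) → EuclideanSpace ℝ (Fin d) :=
    fun j => if h : j = i then 0 else θfun j h with hθt
  have hcoord : ∀ (y : EuclideanSpace ℝ (Fin (m i))) (k : Fin N),
      conjProfile γ θtilde i y k = if h : k = i then h ▸ y else γ i k y (θfun k h) := by
    intro y k
    by_cases h : k = i
    · subst h; simp [conjProfile]
    · simp [conjProfile, Function.update, h, hθt]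
  have hFx : conjProfile γ θtilde i (xstar i) = xstar := by
    funext k
    rw [hcoord]
    by_cases h : k = i
    · subst h; simp
    · simp only [dif_neg h]
      exact hθval k h
  refine ⟨xstar i, hxstar i, θtilde, ?_, ?_, by rw [hFx]⟩
  · intro j hj
    simp only [hθt, dif_neg hj]
    exact hθΘ j hj
  · -- stationarity
    set Ei := EuclideanSpace ℝ (Fin (m i))
    set Dk : (k : Fin N) → (Ei →L[ℝ] EuclideanSpace ℝ (Fin (m k))) :=
      Function.update (Function.update
        (fun k => (0 : Ei →L[ℝ] EuclideanSpace ℝ (Fin (m k)))) j0 α0) i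
        (ContinuousLinearMap.id ℝ Ei) with hDk
    set φ : (k : Fin N) → (Ei → EuclideanSpace ℝ (Fin (m k))) :=
      Function.update (fun k y => γ i k y (θtilde k)) i (fun y => y) with hφ
    have hFφ : (fun y => conjProfile γ θtilde i y) = fun y k => φ k y := by
      funext y k
      rw [hcoord]
      by_cases h : k = i
      · subst h; simp [hφ]
      · simp only [dif_neg h, hφ, Function.update_of_ne h]
        rw [hθt]
        simp [dif_neg h]
    have hder : ∀ k, HasFDerivAt (φ k) (Dk k) (xstar i) := by
      intro k
      by_cases h : k = i
      · subst h
        simp only [hφ, hDk, Function.update_self]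
        exact hasFDerivAt_id _
      · simp only [hφ, hDk, Function.update_of_ne h]
        have hdiff : DifferentiableAt ℝ (fun y => γ i k y (θtilde k)) (xstar i) := by
          exact (hγdiff k h (θtilde k)) (xstar i)
        have heq : θtilde k = θfun k h := by simp [hθt, dif_neg h]
        have hd2 := hθder k h
        rw [← heq] at hd2
        by_cases h2 : k = j0
        · subst h2
          rw [Function.update_self]
          have : fderiv ℝ (fun y => γ i k y (θtilde k)) (xstar i) = α0 := by
            rw [hd2]; simp
          rw [← this]
          exact hdiff.hasFDerivAt
        · rw [Function.update_of_ne h2]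
          have : fderiv ℝ (fun y => γ i k y (θtilde k)) (xstar i) = 0 := by
            rw [hd2]; simp [dif_neg h2]
          rw [← this]
          exact hdiff.hasFDerivAt
    have hF : HasFDerivAt (fun y => conjProfile γ θtilde i y)
        (ContinuousLinearMap.pi Dk) (xstar i) := by
      rw [hFφ]
      exact hasFDerivAt_pi.2 hder
    have hLx : HasFDerivAt J L (conjProfile γ θtilde i (xstar i)) := by
      rw [hFx]; exact hLJ
    have hcomp : HasFDerivAt (fun y : Ei => J (conjProfile γ θtilde i y))
        (L.comp (ContinuousLinearMap.pi Dk)) (xstar i) := hLx.comp _ hF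
    rw [hcomp.fderiv]
    ext h
    have hpiDk : (ContinuousLinearMap.pi Dk) h
        = (Pi.single i h : (k : Fin N) → EuclideanSpace ℝ (Fin (m k)))
          + (Pi.single j0 (α0 h) : (k : Fin N) → EuclideanSpace ℝ (Fin (m k))) := by
      funext k
      simp only [ContinuousLinearMap.pi_apply, Pi.add_apply]
      by_cases hk : k = i
      · subst hk
        simp [hDk, Pi.single_apply, Ne.symm hj0i, (fun hh => hj0i hh.symm : ¬ k = j0)]
      · by_cases hk2 : k = j0
        · subst hk2
          simp [hDk, Function.update_of_ne hk, Pi.single_apply, hk]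
        · simp [hDk, Function.update_of_ne hk, Function.update_of_ne hk2,
            Pi.single_apply, hk, hk2]
    have hsingle_smul : (Pi.single j0 (α0 h) : (k : Fin N) → EuclideanSpace ℝ (Fin (m k)))
        = (-(Di h)) • (Pi.single j0 u : (k : Fin N) → EuclideanSpace ℝ (Fin (m k))) := by
      funext k
      by_cases hk : k = j0
      · subst hk
        simp [hα0, ContinuousLinearMap.smulRight_apply]
      · simp [Pi.single_apply, hk]
    have hDiApp : L ((Pi.single i h : (k : Fin N) → EuclideanSpace ℝ (Fin (m k)))) = Di h := by
      rw [hDi]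
      simp only [ContinuousLinearMap.comp_apply]
      rw [hsingle i h]
    simp only [ContinuousLinearMap.comp_apply, ContinuousLinearMap.zero_apply]
    rw [hpiDk, map_add, hDiApp, hsingle_smul, map_smul, hLu]
    simp
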